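/- Fix an integer p ≥ 2. If 0 ≤ α ≤ (p−1)/2, then h̄(α) = h(α); if (p−1)/2 ≤ α ≤ p−1, then h̲(α) = h(α). -/

import Mathlib

open Filter MeasureTheory Set
open scoped ENNReal

noncomputable section

/-- Number of words of length `n` over the alphabet `{0, …, p-1}` whose digit sum lies
strictly between `n(α-δ)` and `n(α+δ)`; this is `h(α,n,δ)`. -/
def hcount (p n : ℕ) (α δ : ℝ) : ℕ :=
  Nat.card {w : Fin n → Fin p //
    (n : ℝ) * (α - δ) < ∑ i, ((w i : ℕ) : ℝ) ∧ (∑ i, ((w i : ℕ) : ℝ)) < n * (α + δ)}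

/-- The `p`-adic entropy function
`h(α) = lim_{δ→0} limsup_{n→∞} log h(α,n,δ) / (n log p)`.
Since the inner quantity is nondecreasing in `δ`, the limit as `δ → 0⁺` equals the
infimum over `δ > 0`. -/
def entropy (p : ℕ) (α : ℝ) : ℝ :=
  ⨅ δ : {δ : ℝ // 0 < δ},
    limsup (fun n : ℕ => Real.log (hcount p n α δ) / (n * Real.log p)) atTop

/-- Number of words of length `n` over `{0, …, p-1}` with digit sum `< n(α+δ)`;
this is `h̄(α,n,δ)`. -/
def hbarCount (p n : ℕ) (α δ : ℝ) : ℕ :=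
  Nat.card {w : Fin n → Fin p // (∑ i, ((w i : ℕ) : ℝ)) < n * (α + δ)}

/-- The `p`-adic upper entropy function
`h̄(α) = lim_{δ→0} limsup_{n→∞} log h̄(α,n,δ) / (n log p)`, the limit in `δ`
being the infimum over `δ > 0` by monotonicity in `δ`. -/
def upperEntropy (p : ℕ) (α : ℝ) : ℝ :=
  ⨅ δ : {δ : ℝ // 0 < δ},
    limsup (fun n : ℕ => Real.log (hbarCount p n α δ) / (n * Real.log p)) atTop

/-- Number of words of length `n` over `{0, …, p-1}` with digit sum `> n(α-δ)`;
this is `h̲(α,n,δ)`. -/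
def hlowCount (p n : ℕ) (α δ : ℝ) : ℕ :=
  Nat.card {w : Fin n → Fin p // (n : ℝ) * (α - δ) < ∑ i, ((w i : ℕ) : ℝ)}

/-- The `p`-adic lower entropy function
`h̲(α) = lim_{δ→0} liminf_{n→∞} log h̲(α,n,δ) / (n log p)`, the limit in `δ`
being the infimum over `δ > 0` by monotonicity in `δ`. -/
def lowerEntropy (p : ℕ) (α : ℝ) : ℝ :=
  ⨅ δ : {δ : ℝ // 0 < δ},
    liminf (fun n : ℕ => Real.log (hlowCount p n α δ) / (n * Real.log p)) atTop

/-- The `(n+1)`-th digit `x_{n+1} ∈ {0,…,p-1}` of the non-terminating `p`-adic expansion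
`x = 0.x₁x₂x₃…` of `x ∈ [0,1]` (the expansion not ending in all zeros). -/
def padicDigit (p : ℕ) (x : ℝ) (n : ℕ) : ℤ :=
  (⌈x * p ^ (n + 1)⌉ - 1) - p * (⌈x * p ^ n⌉ - 1)

/-- `S_n(T^m x) = x_{m+1} + ⋯ + x_{m+n}`, the digit sum of length `n` after shifting
`m` times. In particular `msum p x 0 n = S_n(x)`. -/
def msum (p : ℕ) (x : ℝ) (m n : ℕ) : ℤ :=
  ∑ i ∈ Finset.range n, padicDigit p x (m + i)

/-- The `n`-th lower moving digit mean `M̲ₙ(x) = liminf_{m→∞} S_n(T^m x)/n`. -/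
def lowerMn (p : ℕ) (x : ℝ) (n : ℕ) : ℝ :=
  liminf (fun m : ℕ => (msum p x m n : ℝ) / n) atTop

/-- The `n`-th upper moving digit mean `M̄ₙ(x) = limsup_{m→∞} S_n(T^m x)/n`. -/
def upperMn (p : ℕ) (x : ℝ) (n : ℕ) : ℝ :=
  limsup (fun m : ℕ => (msum p x m n : ℝ) / n) atTop

/-- The lower moving digit mean `M̲(x) = lim_{n→∞} M̲ₙ(x)`; the limit exists by
subadditivity, hence equals the `liminf`. -/
def lowerM (p : ℕ) (x : ℝ) : ℝ := liminf (fun n : ℕ => lowerMn p x n) atTop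

/-- The upper moving digit mean `M̄(x) = lim_{n→∞} M̄ₙ(x)`; the limit exists by
subadditivity, hence equals the `limsup`. -/
def upperM (p : ℕ) (x : ℝ) : ℝ := limsup (fun n : ℕ => upperMn p x n) atTop

/-- The lower digit mean `A̲(x) = liminf_{n→∞} S_n(x)/n`. -/
def lowerA (p : ℕ) (x : ℝ) : ℝ := liminf (fun n : ℕ => (msum p x 0 n : ℝ) / n) atTop

/-- The upper digit mean `Ā(x) = limsup_{n→∞} S_n(x)/n`. -/
def upperA (p : ℕ) (x : ℝ) : ℝ := limsup (fun n : ℕ => (msum p x 0 n : ℝ) / n) atTop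

/-- The Banach set `B(α,β) = {x ∈ [0,1] : M̲(x) = α, M̄(x) = β}`. -/
def BanachSet (p : ℕ) (α β : ℝ) : Set ℝ :=
  {x | x ∈ Icc (0 : ℝ) 1 ∧ lowerM p x = α ∧ upperM p x = β}

def Ncnt (p n : ℕ) (k : ℤ) : ℕ :=
  Nat.card {w : Fin n → Fin p // (∑ i, ((w i : ℕ) : ℤ)) = k}

lemma Ncnt_zero (p : ℕ) (k : ℤ) : Ncnt p 0 k = if k = 0 then 1 else 0 := by
  classical
  unfold Ncnt
  split_ifs with h
  · subst h
    rw [Nat.card_eq_one_iff_unique]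
    constructor
    · exact ⟨fun a b => Subtype.ext (funext fun i => i.elim0)⟩
    · exact ⟨⟨fun i => i.elim0, by simp⟩⟩
  · rw [Nat.card_eq_zero]
    left
    refine ⟨fun ⟨w, hw⟩ => ?_⟩
    simp at hw
    exact h hw.symm

lemma Ncnt_neg (p n : ℕ) {k : ℤ} (hk : k < 0) : Ncnt p n k = 0 := by
  rw [Ncnt, Nat.card_eq_zero]
  left
  refine ⟨fun ⟨w, hw⟩ => ?_⟩
  have : (0:ℤ) ≤ ∑ i, ((w i : ℕ) : ℤ) := Finset.sum_nonneg fun i _ => Int.ofNat_nonneg _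
  omega

lemma Ncnt_succ (p n : ℕ) (k : ℤ) :
    Ncnt p (n+1) k = ∑ d : Fin p, Ncnt p n (k - (d : ℕ)) := by
  classical
  have e1 : {w : Fin (n+1) → Fin p // (∑ i, ((w i : ℕ) : ℤ)) = k} ≃
      {q : Fin p × (Fin n → Fin p) // ((q.1 : ℕ) : ℤ) + ∑ i, ((q.2 i : ℕ) : ℤ) = k} := by
    refine (Equiv.subtypeEquiv (Fin.consEquiv (fun _ => Fin p)).symm ?_)
    intro w
    have : ∑ i, ((w i : ℕ) : ℤ) = ((w 0 : ℕ) : ℤ) + ∑ i : Fin n, ((w i.succ : ℕ) : ℤ) :=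
      Fin.sum_univ_succ _
    simp [Fin.consEquiv, Fin.tail, this]
  have e2 : {q : Fin p × (Fin n → Fin p) // ((q.1 : ℕ) : ℤ) + ∑ i, ((q.2 i : ℕ) : ℤ) = k} ≃
      Σ d : Fin p, {w : Fin n → Fin p // (∑ i, ((w i : ℕ) : ℤ)) = k - (d : ℕ)} := by
    refine (Equiv.subtypeProdEquivSigmaSubtype
      (fun (d : Fin p) (w : Fin n → Fin p) => ((d : ℕ) : ℤ) + ∑ i, ((w i : ℕ) : ℤ) = k)).trans ?_
    refine Equiv.sigmaCongrRight fun d => Equiv.subtypeEquiv (Equiv.refl _) fun w => ?_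
    simp
    omega
  rw [Ncnt, Nat.card_congr (e1.trans e2), Nat.card_eq_fintype_card, Fintype.card_sigma]
  congr 1
  ext d
  rw [Ncnt, Nat.card_eq_fintype_card]

lemma Ncnt_symm (p n : ℕ) (hp : 1 ≤ p) (k : ℤ) :
    Ncnt p n k = Ncnt p n ((n : ℤ) * ((p : ℤ) - 1) - k) := by
  classical
  have hval : ∀ d : Fin p, ((Fin.rev d : ℕ) : ℤ) = ((p : ℤ) - 1) - (d : ℕ) := by
    intro d
    have := d.2
    rw [Fin.val_rev]
    push_cast
    omega
  refine Nat.card_congr (Equiv.subtypeEquiv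
    (Equiv.piCongrRight fun _ : Fin n => Fin.revPerm) fun w => ?_)
  have hsum : ∑ i, ((Fin.rev (w i) : ℕ) : ℤ) = (n : ℤ) * ((p : ℤ) - 1) - ∑ i, ((w i : ℕ) : ℤ) := by
    rw [Finset.sum_congr rfl fun i _ => hval (w i), Finset.sum_sub_distrib]
    simp [mul_comm]; ring
  have happ : ∀ i, (Equiv.piCongrRight fun _ : Fin n => Fin.revPerm) w i = Fin.rev (w i) :=
    fun i => rfl
  constructor
  · intro h
    calc ∑ i, (((Equiv.piCongrRight fun _ : Fin n => Fin.revPerm) w i : ℕ) : ℤ)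
        = ∑ i, ((Fin.rev (w i) : ℕ) : ℤ) := by simp [happ]
      _ = (n : ℤ) * ((p : ℤ) - 1) - k := by rw [hsum, h]
  · intro h
    have h2 : ∑ i, ((Fin.rev (w i) : ℕ) : ℤ) = (n : ℤ) * ((p : ℤ) - 1) - k := by
      rw [← h]
      exact (Finset.sum_congr rfl fun i _ => by rw [happ]).symm
    rw [hsum] at h2
    omega

lemma Ncnt_chain (p n : ℕ)
    (step : ∀ k : ℤ, 2*(k+1) ≤ (n : ℤ)*((p:ℤ)-1) → Ncnt p n k ≤ Ncnt p n (k+1)) :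
    ∀ j l : ℤ, j ≤ l → 2*l ≤ (n : ℤ)*((p:ℤ)-1) → Ncnt p n j ≤ Ncnt p n l := by
  intro j l hjl h2l
  have H : ∀ l : ℤ, j ≤ l → (2*l ≤ (n : ℤ)*((p:ℤ)-1) → Ncnt p n j ≤ Ncnt p n l) := by
    refine Int.le_induction ?_ ?_
    · intro _; exact le_rfl
    · intro l _ IH h2
      exact (IH (by linarith)).trans (step l (by linarith))
  exact H l hjl h2l

lemma Ncnt_mono' (p n : ℕ) (hp : 1 ≤ p)
    (step : ∀ k : ℤ, 2*(k+1) ≤ (n : ℤ)*((p:ℤ)-1) → Ncnt p n k ≤ Ncnt p n (k+1)) :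
    ∀ j l : ℤ, j ≤ l → j + l ≤ (n : ℤ)*((p:ℤ)-1) → Ncnt p n j ≤ Ncnt p n l := by
  intro j l hjl hsum
  set s : ℤ := (n : ℤ)*((p:ℤ)-1) with hs
  by_cases h2l : 2*l ≤ s
  · exact Ncnt_chain p n step j l hjl h2l
  · push_neg at h2l
    have hsym : Ncnt p n l = Ncnt p n (s - l) := by
      rw [Ncnt_symm p n hp (s - l)]
      ring_nf
      congr 1; rw [hs]; ring
    rw [hsym]
    exact Ncnt_chain p n step j (s - l) (by linarith) (by linarith)

lemma Ncnt_step (p : ℕ) (hp : 1 ≤ p) :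
    ∀ n : ℕ, ∀ k : ℤ, 2*(k+1) ≤ (n : ℤ)*((p:ℤ)-1) → Ncnt p n k ≤ Ncnt p n (k+1) := by
  intro n
  induction n with
  | zero =>
    intro k hk
    simp only [Nat.cast_zero, zero_mul] at hk
    rw [Ncnt_zero, if_neg (by linarith : ¬ k = 0)]
    exact Nat.zero_le _
  | succ n IH =>
    intro k hk
    have hp1 : (1:ℤ) ≤ (p:ℤ) := by exact_mod_cast hp
    have four : Ncnt p (n+1) (k+1) + Ncnt p n (k+1-(p:ℤ)) =
        Ncnt p (n+1) k + Ncnt p n (k+1) := by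
      have h1 : Ncnt p (n+1) (k+1) = ∑ d ∈ Finset.range p, Ncnt p n (k+1-(d:ℤ)) := by
        rw [Ncnt_succ]
        exact Fin.sum_univ_eq_sum_range (fun d => Ncnt p n (k+1-(d:ℤ))) p
      have h2 : Ncnt p (n+1) k = ∑ d ∈ Finset.range p, Ncnt p n (k-(d:ℤ)) := by
        rw [Ncnt_succ]
        exact Fin.sum_univ_eq_sum_range (fun d => Ncnt p n (k-(d:ℤ))) p
      rw [h1, h2]
      rw [← Finset.sum_range_succ (fun d => Ncnt p n (k+1-(d:ℤ))) p]
      rw [Finset.sum_range_succ' (fun d => Ncnt p n (k+1-(d:ℤ))) p]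
      simp only [Nat.cast_zero, sub_zero, Nat.cast_add, Nat.cast_one]
      congr 1
      apply Finset.sum_congr rfl
      intro d _
      congr 1
      ring
    have hle : Ncnt p n (k+1-(p:ℤ)) ≤ Ncnt p n (k+1) := by
      apply Ncnt_mono' p n hp IH (k+1-(p:ℤ)) (k+1) (by linarith)
      push_cast at hk ⊢
      linarith
    omega

lemma Ncnt_central (p n : ℕ) (hp : 1 ≤ p) {j l : ℤ} (hjl : j ≤ l)
    (hsum : j + l ≤ (n : ℤ)*((p:ℤ)-1)) : Ncnt p n j ≤ Ncnt p n l :=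
  Ncnt_mono' p n hp (Ncnt_step p hp n) j l hjl hsum

lemma Ncnt_zero_sum (p n : ℕ) (hp : 1 ≤ p) : 1 ≤ Ncnt p n 0 := by
  have : Nonempty {w : Fin n → Fin p // (∑ i, ((w i : ℕ) : ℤ)) = 0} :=
    ⟨⟨fun _ => ⟨0, hp⟩, by simp⟩⟩
  exact Nat.card_pos


open Classical in
lemma hcount_eq_filter (p n : ℕ) (α δ : ℝ) :
    hcount p n α δ = (Finset.univ.filter fun w : Fin n → Fin p =>
      (n : ℝ) * (α - δ) < ∑ i, ((w i : ℕ) : ℝ) ∧ (∑ i, ((w i : ℕ) : ℝ)) < n * (α + δ)).card := by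
  rw [hcount, Nat.card_eq_fintype_card, Fintype.card_subtype]

open Classical in
lemma hbarCount_eq_filter (p n : ℕ) (α δ : ℝ) :
    hbarCount p n α δ = (Finset.univ.filter fun w : Fin n → Fin p =>
      (∑ i, ((w i : ℕ) : ℝ)) < n * (α + δ)).card := by
  rw [hbarCount, Nat.card_eq_fintype_card, Fintype.card_subtype]

open Classical in
lemma Ncnt_eq_filter (p n : ℕ) (k : ℤ) :
    Ncnt p n k = (Finset.univ.filter fun w : Fin n → Fin p =>
      (∑ i, ((w i : ℕ) : ℤ)) = k).card := by
  rw [Ncnt, Nat.card_eq_fintype_card, Fintype.card_subtype]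

lemma sum_word_le (p n : ℕ) (hp : 1 ≤ p) (w : Fin n → Fin p) :
    (∑ i, ((w i : ℕ) : ℤ)) ≤ (n : ℤ) * ((p : ℤ) - 1) := by
  calc (∑ i, ((w i : ℕ) : ℤ)) ≤ ∑ _i : Fin n, ((p : ℤ) - 1) := by
        apply Finset.sum_le_sum
        intro i _
        have := (w i).2
        push_cast
        omega
    _ = (n : ℤ) * ((p : ℤ) - 1) := by simp [mul_comm]; ring

lemma sum_word_real_int (p n : ℕ) (w : Fin n → Fin p) :
    ∑ i, ((w i : ℕ) : ℝ) = (((∑ i, ((w i : ℕ) : ℤ)) : ℤ) : ℝ) := by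
  push_cast
  rfl

/-- If `n(α-δ) < k < n(α+δ)` then `Ncnt p n k ≤ hcount p n α δ`. -/
lemma Ncnt_le_hcount (p n : ℕ) (α δ : ℝ) (k : ℤ)
    (h1 : (n : ℝ) * (α - δ) < (k : ℝ)) (h2 : (k : ℝ) < n * (α + δ)) :
    Ncnt p n k ≤ hcount p n α δ := by
  classical
  rw [Ncnt_eq_filter, hcount_eq_filter]
  apply Finset.card_le_card
  intro w hw
  simp only [Finset.mem_filter, Finset.mem_univ, true_and] at hw ⊢
  rw [sum_word_real_int, hw]
  exact ⟨h1, h2⟩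

lemma key_bounds (p n : ℕ) (hp : 2 ≤ p) (α δ : ℝ) (hα : 0 ≤ α)
    (hα2 : α ≤ ((p : ℝ) - 1) / 2) (hδ : 0 < δ) (hn : (1 : ℝ) < n * δ) :
    1 ≤ hcount p n α δ ∧ hbarCount p n α δ ≤ (n * (p - 1) + 1) * hcount p n α δ := by
  classical
  have hp1 : 1 ≤ p := le_trans (by norm_num) hp
  have hpR : (2 : ℝ) ≤ (p : ℝ) := by exact_mod_cast hp
  have hnpos : (0 : ℝ) < n := by
    rcases Nat.eq_zero_or_pos n with h | h
    · subst h; simp at hn; linarith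
    · exact_mod_cast h
  set s : ℤ := (n : ℤ) * ((p : ℤ) - 1) with hs
  have hsR : ((s : ℤ) : ℝ) = (n : ℝ) * ((p : ℝ) - 1) := by rw [hs]; push_cast; ring
  have hs0 : 0 ≤ s := by
    rw [hs]
    apply mul_nonneg (Int.ofNat_nonneg n)
    have : (1:ℤ) ≤ (p:ℤ) := by exact_mod_cast hp1
    linarith
  set a : ℤ := ⌈(n : ℝ) * (α + δ)⌉ - 1 with ha
  set b : ℤ := s / 2 with hb
  set k : ℤ := min a b with hk
  have hxpos : (0 : ℝ) < (n : ℝ) * (α + δ) := by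
    apply mul_pos hnpos; linarith
  have ha0 : 0 ≤ a := by
    have h1 : (0:ℤ) < ⌈(n : ℝ) * (α + δ)⌉ := Int.ceil_pos.mpr hxpos
    rw [ha]; omega
  have hb2 : 2 * b ≤ s ∧ s ≤ 2 * b + 1 := by rw [hb]; omega
  have hb0 : 0 ≤ b := by rw [hb]; omega
  have hk0 : 0 ≤ k := le_min ha0 hb0
  have hka : k ≤ a := min_le_left a b
  have hkb' : k ≤ b := min_le_right a b
  have haR : (n : ℝ) * (α + δ) - 1 ≤ ((a : ℤ) : ℝ) := by
    have := Int.le_ceil ((n : ℝ) * (α + δ))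
    rw [ha]; push_cast; linarith
  have haR' : ((a : ℤ) : ℝ) < (n : ℝ) * (α + δ) := by
    have := Int.ceil_lt_add_one ((n : ℝ) * (α + δ))
    rw [ha]; push_cast; linarith
  have hbR : ((n : ℝ) * ((p : ℝ) - 1) - 1) / 2 ≤ ((b : ℤ) : ℝ) := by
    have h2 : s - 1 ≤ 2 * b := by omega
    have h2' : ((s : ℤ) : ℝ) - 1 ≤ 2 * ((b : ℤ) : ℝ) := by exact_mod_cast h2
    rw [hsR] at h2'
    linarith
  have e1 : (n : ℝ) * (α - δ) = (n : ℝ) * α - (n : ℝ) * δ := by ring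
  have e2 : (n : ℝ) * (α + δ) = (n : ℝ) * α + (n : ℝ) * δ := by ring
  have hkupper : (k : ℝ) < (n : ℝ) * (α + δ) :=
    lt_of_le_of_lt (by exact_mod_cast hka) haR'
  have hcen : (n : ℝ) * α ≤ (n : ℝ) * ((p : ℝ) - 1) / 2 := by
    have := mul_le_mul_of_nonneg_left hα2 hnpos.le
    linarith
  have hklower : (n : ℝ) * (α - δ) < (k : ℝ) := by
    rcases min_cases a b with ⟨hmin, _⟩ | ⟨hmin, _⟩ <;> rw [hk, hmin]
    · linarith [haR]
    · linarith [hbR]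
  have hk2s : 2 * k ≤ s := by linarith [hb2.1, hkb']
  have hNk : 1 ≤ Ncnt p n k := by
    calc 1 ≤ Ncnt p n 0 := Ncnt_zero_sum p n hp1
      _ ≤ Ncnt p n k := Ncnt_central p n hp1 hk0 (by rw [← hs]; linarith)
  have hi : 1 ≤ hcount p n α δ :=
    le_trans hNk (Ncnt_le_hcount p n α δ k hklower hkupper)
  refine ⟨hi, ?_⟩
  rw [hbarCount_eq_filter]
  have hcard : (Finset.Icc (0 : ℤ) s).card = n * (p - 1) + 1 := by
    rw [Int.card_Icc]
    have hps : s + 1 - 0 = ((n * (p - 1) + 1 : ℕ) : ℤ) := by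
      rw [hs]
      push_cast [Nat.cast_sub hp1]
      ring
    rw [hps, Int.toNat_natCast]
  calc (Finset.univ.filter fun w : Fin n → Fin p =>
        (∑ i, ((w i : ℕ) : ℝ)) < n * (α + δ)).card
      ≤ hcount p n α δ * (Finset.Icc (0 : ℤ) s).card := by
        apply Finset.card_le_mul_card_image_of_maps_to
          (f := fun w : Fin n → Fin p => (∑ i, ((w i : ℕ) : ℤ)))
        · intro w _
          rw [Finset.mem_Icc]
          refine ⟨Finset.sum_nonneg fun i _ => Int.ofNat_nonneg _, ?_⟩
          rw [hs]
          exact sum_word_le p n hp1 w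
        · intro m _
          rw [Finset.filter_filter]
          by_cases hne : (Finset.univ.filter fun w : Fin n → Fin p =>
              ((∑ i, ((w i : ℕ) : ℝ)) < n * (α + δ)) ∧ (∑ i, ((w i : ℕ) : ℤ)) = m).Nonempty
          · obtain ⟨w0, hw0⟩ := hne
            simp only [Finset.mem_filter, Finset.mem_univ, true_and] at hw0
            obtain ⟨hw0lt, hw0m⟩ := hw0
            have hm0 : 0 ≤ m := by
              rw [← hw0m]; exact Finset.sum_nonneg fun i _ => Int.ofNat_nonneg _
            have hmlt : (m : ℝ) < (n : ℝ) * (α + δ) := by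
              rw [← hw0m, ← sum_word_real_int]; exact hw0lt
            have hms : m ≤ s := by rw [← hw0m, hs]; exact sum_word_le p n hp1 w0
            have hstep : Ncnt p n m ≤ Ncnt p n k := by
              by_cases hmk : m ≤ k
              · exact Ncnt_central p n hp1 hmk (by rw [← hs]; linarith)
              · push_neg at hmk
                have hma : m ≤ a := by
                  have h3 : (m : ℝ) < ((⌈(n : ℝ) * (α + δ)⌉ : ℤ) : ℝ) :=
                    lt_of_lt_of_le hmlt (Int.le_ceil _)
                  have h4 : m < ⌈(n : ℝ) * (α + δ)⌉ := by exact_mod_cast h3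
                  rw [ha]; omega
                have hkb : k = b := by
                  rcases min_cases a b with ⟨hmin, _⟩ | ⟨hmin, _⟩
                  · exfalso; rw [hk, hmin] at hmk; omega
                  · rw [hk, hmin]
                have hbm : b < m := by rw [← hkb]; exact hmk
                have hNsym : Ncnt p n m = Ncnt p n ((n : ℤ) * ((p : ℤ) - 1) - m) :=
                  Ncnt_symm p n hp1 m
                rw [hNsym]
                apply Ncnt_central p n hp1
                · rw [hkb, ← hs]; omega
                · rw [← hs]; omega
            calc (Finset.univ.filter fun w : Fin n → Fin p =>
                  ((∑ i, ((w i : ℕ) : ℝ)) < n * (α + δ)) ∧ (∑ i, ((w i : ℕ) : ℤ)) = m).card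
                ≤ Ncnt p n m := by
                  rw [Ncnt_eq_filter]
                  apply Finset.card_le_card
                  intro w hw
                  simp only [Finset.mem_filter, Finset.mem_univ, true_and] at hw ⊢
                  exact hw.2
              _ ≤ Ncnt p n k := hstep
              _ ≤ hcount p n α δ := Ncnt_le_hcount p n α δ k hklower hkupper
          · rw [Finset.not_nonempty_iff_eq_empty] at hne
            rw [hne]
            simp
    _ = (n * (p - 1) + 1) * hcount p n α δ := by rw [hcard, mul_comm]

lemma hcount_le_hbarCount (p n : ℕ) (α δ : ℝ) :
    hcount p n α δ ≤ hbarCount p n α δ := by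
  classical
  rw [hcount_eq_filter, hbarCount_eq_filter]
  apply Finset.card_le_card
  intro w hw
  simp only [Finset.mem_filter, Finset.mem_univ, true_and] at hw ⊢
  exact hw.2

lemma hbarCount_le_pow (p n : ℕ) (α δ : ℝ) : hbarCount p n α δ ≤ p ^ n := by
  rw [hbarCount]
  calc Nat.card {w : Fin n → Fin p // (∑ i, ((w i : ℕ) : ℝ)) < n * (α + δ)}
      ≤ Nat.card (Fin n → Fin p) :=
        Nat.card_le_card_of_injective Subtype.val Subtype.val_injective
    _ = p ^ n := by simp [Nat.card_eq_fintype_card]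

lemma one_le_hbarCount (p n : ℕ) (hp : 1 ≤ p) (hn : 1 ≤ n) (α δ : ℝ) (hα : 0 ≤ α)
    (hδ : 0 < δ) : 1 ≤ hbarCount p n α δ := by
  have hpos : (0:ℝ) < (n:ℝ) * (α + δ) := by
    have : (1:ℝ) ≤ n := by exact_mod_cast hn
    nlinarith
  have : Nonempty {w : Fin n → Fin p // (∑ i, ((w i : ℕ) : ℝ)) < n * (α + δ)} :=
    ⟨⟨fun _ => ⟨0, hp⟩, by simpa using hpos⟩⟩
  exact Nat.card_pos

lemma hbarCount_zero (p : ℕ) (α δ : ℝ) : hbarCount p 0 α δ = 0 := by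
  rw [hbarCount, Nat.card_eq_zero]
  left
  refine ⟨fun ⟨w, hw⟩ => ?_⟩
  simp at hw

def wordAppend (p m n : ℕ) : (Fin m → Fin p) × (Fin n → Fin p) ≃ (Fin (m+n) → Fin p) :=
  (Equiv.sumArrowEquivProdArrow _ _ _).symm.trans
    (Equiv.arrowCongr finSumFinEquiv (Equiv.refl _))

lemma wordAppend_sum (p m n : ℕ) (a : Fin m → Fin p) (b : Fin n → Fin p) :
    ∑ i, (((wordAppend p m n (a, b)) i : ℕ) : ℝ) =
      (∑ i, ((a i : ℕ) : ℝ)) + ∑ i, ((b i : ℕ) : ℝ) := by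
  have key : ∀ x : Fin m ⊕ Fin n,
      wordAppend p m n (a, b) (finSumFinEquiv x) = Sum.elim a b x := by
    intro x
    simp only [wordAppend, Equiv.trans_apply, Equiv.arrowCongr_apply, Equiv.coe_refl,
      Function.comp_apply, Equiv.symm_apply_apply]
    cases x <;> rfl
  rw [← Fintype.sum_equiv finSumFinEquiv
    (fun x => (((wordAppend p m n (a, b)) (finSumFinEquiv x) : ℕ) : ℝ))
    (fun i => (((wordAppend p m n (a, b)) i : ℕ) : ℝ)) (fun x => rfl)]
  rw [Finset.sum_congr rfl fun x _ => by rw [key x]]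
  rw [Fintype.sum_sum_type]
  simp

lemma hbarCount_supermul (p m n : ℕ) (α δ : ℝ) :
    hbarCount p m α δ * hbarCount p n α δ ≤ hbarCount p (m+n) α δ := by
  rw [hbarCount, hbarCount, hbarCount, ← Nat.card_prod]
  apply Nat.card_le_card_of_injective
    (fun x : {w : Fin m → Fin p // (∑ i, ((w i : ℕ) : ℝ)) < m * (α + δ)} ×
        {w : Fin n → Fin p // (∑ i, ((w i : ℕ) : ℝ)) < n * (α + δ)} =>
      (⟨wordAppend p m n (x.1.1, x.2.1), by
        rw [wordAppend_sum]
        push_cast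
        have e : ((m:ℝ) + (n:ℝ))*(α+δ) = (m:ℝ)*(α+δ) + (n:ℝ)*(α+δ) := by ring
        have h1 := x.1.2
        have h2 := x.2.2
        linarith⟩ :
        {w : Fin (m+n) → Fin p // (∑ i, ((w i : ℕ) : ℝ)) < (m+n : ℕ) * (α + δ)}))
  rintro ⟨⟨a1, ha1⟩, ⟨b1, hb1⟩⟩ ⟨⟨a2, ha2⟩, ⟨b2, hb2⟩⟩ h
  have h2 : wordAppend p m n (a1, b1) = wordAppend p m n (a2, b2) :=
    congrArg Subtype.val h
  have h3 := (wordAppend p m n).injective h2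
  have h4 : a1 = a2 := congrArg Prod.fst h3
  have h5 : b1 = b2 := congrArg Prod.snd h3
  subst h4; subst h5; rfl

lemma rev_sum_real (p n : ℕ) (hp : 1 ≤ p) (w : Fin n → Fin p) :
    ∑ i, ((Fin.rev (w i) : ℕ) : ℝ) = (n : ℝ) * ((p : ℝ) - 1) - ∑ i, ((w i : ℕ) : ℝ) := by
  have hval : ∀ d : Fin p, ((Fin.rev d : ℕ) : ℝ) = ((p : ℝ) - 1) - ((d : ℕ) : ℝ) := by
    intro d
    have h1 := d.2
    rw [Fin.val_rev]
    have : ((p - (d + 1) : ℕ) : ℝ) = (p : ℝ) - ((d : ℕ) : ℝ) - 1 := by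
      have : (d : ℕ) + 1 ≤ p := h1
      push_cast [Nat.cast_sub this]
      ring
    rw [this]; ring
  rw [Finset.sum_congr rfl fun i _ => hval (w i), Finset.sum_sub_distrib]
  simp [mul_comm]; ring

lemma hcount_reflect (p n : ℕ) (hp : 1 ≤ p) (α δ : ℝ) :
    hcount p n α δ = hcount p n ((p : ℝ) - 1 - α) δ := by
  rw [hcount, hcount]
  refine Nat.card_congr (Equiv.subtypeEquiv
    (Equiv.piCongrRight fun _ : Fin n => Fin.revPerm) fun w => ?_)
  have happ : ∀ i, (Equiv.piCongrRight fun _ : Fin n => Fin.revPerm) w i = Fin.rev (w i) :=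
    fun i => rfl
  have hs2 : ∑ i, (((Equiv.piCongrRight fun _ : Fin n => Fin.revPerm) w i : ℕ) : ℝ)
      = (n : ℝ) * ((p : ℝ) - 1) - ∑ i, ((w i : ℕ) : ℝ) := by
    rw [Finset.sum_congr rfl fun i _ => by rw [happ i]]
    exact rev_sum_real p n hp w
  rw [hs2]
  have e1 : (n : ℝ) * (((p : ℝ) - 1 - α) - δ) = (n : ℝ) * ((p : ℝ) - 1) - (n : ℝ) * (α + δ) := by
    ring
  have e2 : (n : ℝ) * (((p : ℝ) - 1 - α) + δ) = (n : ℝ) * ((p : ℝ) - 1) - (n : ℝ) * (α - δ) := by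
    ring
  rw [e1, e2]
  constructor
  · rintro ⟨h1, h2⟩; constructor <;> linarith
  · rintro ⟨h1, h2⟩; constructor <;> linarith

lemma hlowCount_reflect (p n : ℕ) (hp : 1 ≤ p) (α δ : ℝ) :
    hlowCount p n α δ = hbarCount p n ((p : ℝ) - 1 - α) δ := by
  rw [hlowCount, hbarCount]
  refine Nat.card_congr (Equiv.subtypeEquiv
    (Equiv.piCongrRight fun _ : Fin n => Fin.revPerm) fun w => ?_)
  have happ : ∀ i, (Equiv.piCongrRight fun _ : Fin n => Fin.revPerm) w i = Fin.rev (w i) :=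
    fun i => rfl
  have hs2 : ∑ i, (((Equiv.piCongrRight fun _ : Fin n => Fin.revPerm) w i : ℕ) : ℝ)
      = (n : ℝ) * ((p : ℝ) - 1) - ∑ i, ((w i : ℕ) : ℝ) := by
    rw [Finset.sum_congr rfl fun i _ => by rw [happ i]]
    exact rev_sum_real p n hp w
  rw [hs2]
  have e2 : (n : ℝ) * (((p : ℝ) - 1 - α) + δ) = (n : ℝ) * ((p : ℝ) - 1) - (n : ℝ) * (α - δ) := by
    ring
  rw [e2]
  constructor
  · intro h1; linarith
  · intro h1; linarith

lemma hbar_liminf_eq_limsup (p : ℕ) (hp : 2 ≤ p) (α δ : ℝ) (hα : 0 ≤ α) (hδ : 0 < δ) :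
    liminf (fun n : ℕ => Real.log (hbarCount p n α δ) / (n * Real.log p)) atTop =
    limsup (fun n : ℕ => Real.log (hbarCount p n α δ) / (n * Real.log p)) atTop := by
  have hp1 : 1 ≤ p := le_trans (by norm_num) hp
  have hp1R : (1 : ℝ) < p := by exact_mod_cast hp.trans_lt' (by norm_num)
  have hlogp : 0 < Real.log p := Real.log_pos hp1R
  set u : ℕ → ℝ := fun n => - Real.log (hbarCount p n α δ) with hu
  have hsub : Subadditive u := by
    intro m n
    rcases Nat.eq_zero_or_pos m with hm | hm
    · subst hm; simp [hu, hbarCount_zero]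
    rcases Nat.eq_zero_or_pos n with hn | hn
    · subst hn; simp [hu, hbarCount_zero]
    have h1 : 1 ≤ hbarCount p m α δ := one_le_hbarCount p m hp1 hm α δ hα hδ
    have h2 : 1 ≤ hbarCount p n α δ := one_le_hbarCount p n hp1 hn α δ hα hδ
    have h1R : (1 : ℝ) ≤ (hbarCount p m α δ : ℝ) := by exact_mod_cast h1
    have h2R : (1 : ℝ) ≤ (hbarCount p n α δ : ℝ) := by exact_mod_cast h2
    show - Real.log (hbarCount p (m + n) α δ) ≤
      - Real.log (hbarCount p m α δ) + - Real.log (hbarCount p n α δ)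
    rw [← neg_add, neg_le_neg_iff, ← Real.log_mul (by linarith) (by linarith)]
    apply Real.log_le_log (by positivity)
    have := hbarCount_supermul p m n α δ
    push_cast
    exact_mod_cast this
  have hbdd : BddBelow (Set.range fun n : ℕ => u n / n) := by
    refine ⟨- Real.log p, ?_⟩
    rintro x ⟨n, rfl⟩
    rcases Nat.eq_zero_or_pos n with hn | hn
    · subst hn; simp [hu, hbarCount_zero]; linarith
    have hnR : (0 : ℝ) < n := by exact_mod_cast hn
    have hle : Real.log (hbarCount p n α δ) ≤ n * Real.log p := by
      calc Real.log (hbarCount p n α δ) ≤ Real.log ((p : ℝ) ^ n) := by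
            rcases Nat.eq_zero_or_pos (hbarCount p n α δ) with h0 | h0
            · rw [h0]; simp; positivity
            · apply Real.log_le_log (by exact_mod_cast h0)
              have := hbarCount_le_pow p n α δ
              push_cast
              exact_mod_cast this
        _ = n * Real.log p := by rw [Real.log_pow]
    show - Real.log p ≤ u n / n
    rw [le_div_iff₀ hnR]
    have : u n = - Real.log (hbarCount p n α δ) := rfl
    rw [this]
    linarith
  have htend := hsub.tendsto_lim hbdd
  have heq : (fun n : ℕ => Real.log (hbarCount p n α δ) / (n * Real.log p)) =
      fun n : ℕ => - (u n / n) / Real.log p := by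
    funext n
    have : - (u n / n) = Real.log (hbarCount p n α δ) / n := by
      rw [hu]; simp only; rw [neg_div, neg_neg]
    rw [this, div_div]
  have htend2 : Tendsto (fun n : ℕ => Real.log (hbarCount p n α δ) / (n * Real.log p))
      atTop (nhds (- hsub.lim / Real.log p)) := by
    rw [heq]
    exact (htend.neg).div_const _
  rw [htend2.liminf_eq, htend2.limsup_eq]

lemma limsup_hbar_eq_hcount (p : ℕ) (hp : 2 ≤ p) (α δ : ℝ) (hα : 0 ≤ α)
    (hα2 : α ≤ ((p : ℝ) - 1) / 2) (hδ : 0 < δ) :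
    limsup (fun n : ℕ => Real.log (hbarCount p n α δ) / (n * Real.log p)) atTop =
    limsup (fun n : ℕ => Real.log (hcount p n α δ) / (n * Real.log p)) atTop := by
  have hp1 : 1 ≤ p := le_trans (by norm_num) hp
  have hp1R : (1 : ℝ) < p := by exact_mod_cast hp.trans_lt' (by norm_num)
  have hlogp : 0 < Real.log p := Real.log_pos hp1R
  set f : ℕ → ℝ := fun n => Real.log (hcount p n α δ) / (n * Real.log p) with hf
  set g : ℕ → ℝ := fun n => Real.log (hbarCount p n α δ) / (n * Real.log p) with hg
  set c : ℕ → ℝ := fun n => Real.log ((n * (p - 1) + 1 : ℕ)) / (n * Real.log p) with hc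
  have hev : ∀ᶠ n : ℕ in atTop, (1 : ℝ) < (n : ℝ) * δ :=
    ((tendsto_natCast_atTop_atTop (R := ℝ)).atTop_mul_const hδ).eventually_gt_atTop 1
  have hfacts : ∀ᶠ n : ℕ in atTop,
      0 ≤ f n ∧ f n ≤ g n ∧ g n ≤ 1 ∧ g n ≤ f n + c n ∧ 0 ≤ c n := by
    filter_upwards [hev, Filter.eventually_gt_atTop 0] with n hn hn0
    have hkey := key_bounds p n hp α δ hα hα2 hδ hn
    have h1 : 1 ≤ hcount p n α δ := hkey.1
    have h1R : (1 : ℝ) ≤ (hcount p n α δ : ℝ) := by exact_mod_cast h1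
    have hbar1 : 1 ≤ hbarCount p n α δ := le_trans h1 (hcount_le_hbarCount p n α δ)
    have hbar1R : (1 : ℝ) ≤ (hbarCount p n α δ : ℝ) := by exact_mod_cast hbar1
    have hnR : (0 : ℝ) < n := by exact_mod_cast hn0
    have hdenom : (0 : ℝ) < (n : ℝ) * Real.log p := by positivity
    have hM1 : (1 : ℝ) ≤ ((n * (p - 1) + 1 : ℕ) : ℝ) := by
      have : 1 ≤ n * (p - 1) + 1 := by omega
      exact_mod_cast this
    refine ⟨?_, ?_, ?_, ?_, ?_⟩
    · exact div_nonneg (Real.log_nonneg h1R) hdenom.le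
    · apply (div_le_div_iff_of_pos_right hdenom).mpr
      apply Real.log_le_log (by linarith)
      exact_mod_cast hcount_le_hbarCount p n α δ
    · rw [hg]
      simp only
      rw [div_le_one hdenom]
      calc Real.log (hbarCount p n α δ) ≤ Real.log ((p : ℝ) ^ n) := by
            apply Real.log_le_log (by linarith)
            have := hbarCount_le_pow p n α δ
            push_cast
            exact_mod_cast this
        _ = n * Real.log p := by rw [Real.log_pow]
    · have hlog2 : Real.log (hbarCount p n α δ) ≤
          Real.log ((n * (p - 1) + 1 : ℕ)) + Real.log (hcount p n α δ) := by
        rw [← Real.log_mul (by linarith) (by linarith)]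
        apply Real.log_le_log (by linarith)
        have := hkey.2
        have hcast : (((n * (p - 1) + 1) * hcount p n α δ : ℕ) : ℝ) =
            ((n * (p - 1) + 1 : ℕ) : ℝ) * (hcount p n α δ : ℝ) := by push_cast; ring
        calc ((hbarCount p n α δ : ℕ) : ℝ) ≤ (((n * (p - 1) + 1) * hcount p n α δ : ℕ) : ℝ) := by
              exact_mod_cast this
          _ = _ := hcast
      have hgle : g n ≤ (Real.log ((n * (p - 1) + 1 : ℕ)) + Real.log (hcount p n α δ)) /
          ((n : ℝ) * Real.log p) := (div_le_div_iff_of_pos_right hdenom).mpr hlog2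
      calc g n ≤ _ := hgle
        _ = f n + c n := by rw [hf, hc]; simp only; rw [add_div]; ring
    · exact div_nonneg (Real.log_nonneg hM1) hdenom.le
  have hctend : Filter.Tendsto c atTop (nhds 0) := by
    have hlogn : Filter.Tendsto (fun n : ℕ => Real.log n / (n : ℝ)) atTop (nhds 0) := by
      have h1 := Real.isLittleO_log_id_atTop.tendsto_div_nhds_zero
      exact h1.comp tendsto_natCast_atTop_atTop
    have hB : Filter.Tendsto
        (fun n : ℕ => Real.log n / (n : ℝ) * (1 / Real.log p) + 1 / (n : ℝ))
        atTop (nhds 0) := by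
      have := (hlogn.mul_const (1 / Real.log p)).add tendsto_one_div_atTop_nhds_zero_nat
      simpa using this
    apply tendsto_of_tendsto_of_tendsto_of_le_of_le' tendsto_const_nhds hB
    · filter_upwards [hfacts] with n hn
      exact hn.2.2.2.2
    · filter_upwards [Filter.eventually_gt_atTop 0] with n hn0
      have hnR : (0 : ℝ) < n := by exact_mod_cast hn0
      have hdenom : (0 : ℝ) < (n : ℝ) * Real.log p := by positivity
      have hMle : ((n * (p - 1) + 1 : ℕ) : ℝ) ≤ (n : ℝ) * p := by
        have h2 : n * (p - 1) + 1 ≤ n * p := by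
          have hp1 : 1 ≤ p := le_trans (by norm_num) hp
          calc n * (p - 1) + 1 ≤ n * (p - 1) + n := by omega
            _ = n * p := by rw [← Nat.mul_succ]; congr 1; omega
        exact_mod_cast h2
      have hM1 : (1 : ℝ) ≤ ((n * (p - 1) + 1 : ℕ) : ℝ) := by
        have : 1 ≤ n * (p - 1) + 1 := by omega
        exact_mod_cast this
      have hlogM : Real.log ((n * (p - 1) + 1 : ℕ)) ≤ Real.log n + Real.log p := by
        calc Real.log ((n * (p - 1) + 1 : ℕ)) ≤ Real.log ((n : ℝ) * p) :=
              Real.log_le_log (by linarith) hMle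
          _ = Real.log n + Real.log p := Real.log_mul (by linarith) (by linarith)
      have step : c n ≤ (Real.log n + Real.log p) / ((n : ℝ) * Real.log p) :=
        (div_le_div_iff_of_pos_right hdenom).mpr hlogM
      calc c n ≤ _ := step
        _ = Real.log n / (n : ℝ) * (1 / Real.log p) + 1 / (n : ℝ) := by
          field_simp
  -- boundedness facts
  have hbddg : Filter.IsBoundedUnder (· ≤ ·) atTop g :=
    Filter.isBoundedUnder_of_eventually_le (a := 1)
      (by filter_upwards [hfacts] with n hn using hn.2.2.1)
  have hbddf : Filter.IsBoundedUnder (· ≤ ·) atTop f :=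
    Filter.isBoundedUnder_of_eventually_le (a := 1)
      (by filter_upwards [hfacts] with n hn using le_trans hn.2.1 hn.2.2.1)
  have hbddfg : Filter.IsBoundedUnder (· ≥ ·) atTop f :=
    Filter.isBoundedUnder_of_eventually_ge (a := 0)
      (by filter_upwards [hfacts] with n hn using hn.1)
  have hbddgg : Filter.IsBoundedUnder (· ≥ ·) atTop g :=
    Filter.isBoundedUnder_of_eventually_ge (a := 0)
      (by filter_upwards [hfacts] with n hn using le_trans hn.1 hn.2.1)
  have hcobf : Filter.IsCoboundedUnder (· ≤ ·) atTop f := hbddfg.isCoboundedUnder_le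
  have hcobg : Filter.IsCoboundedUnder (· ≤ ·) atTop g := hbddgg.isCoboundedUnder_le
  apply le_antisymm
  · apply le_of_forall_pos_le_add
    intro ε hε
    have hevc : ∀ᶠ n : ℕ in atTop, c n < ε := by
      have := hctend.eventually (gt_mem_nhds hε)
      exact this
    have hevge : ∀ᶠ n : ℕ in atTop, g n ≤ f n + ε := by
      filter_upwards [hfacts, hevc] with n hn hcn
      linarith [hn.2.2.2.1]
    have hbddfe : Filter.IsBoundedUnder (· ≤ ·) atTop (fun n => f n + ε) := by
      apply Filter.isBoundedUnder_of_eventually_le (a := 1 + ε)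
      filter_upwards [hfacts] with n hn
      have h1 := le_trans hn.2.1 hn.2.2.1
      linarith
    calc limsup g atTop ≤ limsup (fun n => f n + ε) atTop :=
          limsup_le_limsup hevge hcobg hbddfe
      _ = limsup f atTop + ε := limsup_add_const atTop f ε hbddf hcobf
  · exact limsup_le_limsup (by filter_upwards [hfacts] with n hn using hn.2.1) hcobf hbddg

/-- For an integer `p ≥ 2` and `0 ≤ α ≤ p-1`: if `α ≤ (p-1)/2` then
`h̄(α) = h(α)`; if `(p-1)/2 ≤ α` then `h̲(α) = h(α)`. -/
theorem upper_lower_entropy_eq_entropy (p : ℕ) (hp : 2 ≤ p) (α : ℝ)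
    (hα : 0 ≤ α) (hα' : α ≤ (p : ℝ) - 1) :
    (α ≤ ((p : ℝ) - 1) / 2 → upperEntropy p α = entropy p α) ∧
    (((p : ℝ) - 1) / 2 ≤ α → lowerEntropy p α = entropy p α) := by
  have hp1 : 1 ≤ p := le_trans (by norm_num) hp
  constructor
  · intro h2
    rw [upperEntropy, entropy]
    exact iInf_congr fun δ => limsup_hbar_eq_hcount p hp α δ.1 hα h2 δ.2
  · intro h2
    have hβ0 : 0 ≤ (p : ℝ) - 1 - α := by linarith
    have hβ2 : (p : ℝ) - 1 - α ≤ ((p : ℝ) - 1) / 2 := by linarith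
    rw [lowerEntropy, entropy]
    apply iInf_congr
    intro δ
    calc liminf (fun n : ℕ => Real.log (hlowCount p n α δ) / (n * Real.log p)) atTop
        = liminf (fun n : ℕ =>
            Real.log (hbarCount p n ((p:ℝ)-1-α) δ) / (n * Real.log p)) atTop := by
          congr 1
          funext n
          rw [hlowCount_reflect p n hp1 α δ]
      _ = limsup (fun n : ℕ =>
            Real.log (hbarCount p n ((p:ℝ)-1-α) δ) / (n * Real.log p)) atTop :=
          hbar_liminf_eq_limsup p hp ((p:ℝ)-1-α) δ hβ0 δ.2
      _ = limsup (fun n : ℕ =>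
            Real.log (hcount p n ((p:ℝ)-1-α) δ) / (n * Real.log p)) atTop :=
          limsup_hbar_eq_hcount p hp ((p:ℝ)-1-α) δ hβ0 hβ2 δ.2
      _ = limsup (fun n : ℕ => Real.log (hcount p n α δ) / (n * Real.log p)) atTop := by
          congr 1
          funext n
          rw [← hcount_reflect p n hp1 α δ]
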